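/- For any even n, d(L(n, 2n-1)) = n² - n; i.e., there exists a partial coloring of the n×n square with exactly n uncolored entries (one per row and column) that uniquely extends to a proper coloring with 2n-1 colors, and no partial coloring with more than n uncolored entries uniquely extends. -/
import Mathlib


/-- An `L(n,k)`: an `n × n` array colored with `k` colors such that all entries
in any row and any column have distinct colors. -/
def IsLatin (n k : ℕ) (L : Fin n → Fin n → Fin k) : Prop :=
  (∀ i : Fin n, Function.Injective (L i)) ∧
  (∀ j : Fin n, Function.Injective (fun i => L i j))

/-- `L` extends the partial coloring `P`. -/
def ExtendsPC {n k : ℕ} (P : Fin n → Fin n → Option (Fin k))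
    (L : Fin n → Fin n → Fin k) : Prop :=
  ∀ i j c, P i j = some c → L i j = c

/-- The partial coloring `P` uniquely extends to an `L(n,k)`. -/
def UniquelyExtends (n k : ℕ) (P : Fin n → Fin n → Option (Fin k)) : Prop :=
  ∃! L : Fin n → Fin n → Fin k, IsLatin n k L ∧ ExtendsPC P L

/-- Number of uncolored entries of a partial coloring. -/
def numUncolored {n k : ℕ} (P : Fin n → Fin n → Option (Fin k)) : ℕ :=
  (Finset.univ.filter (fun p : Fin n × Fin n => P p.1 p.2 = none)).card

/-- Number of colored entries of a partial coloring. -/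
def numColored {n k : ℕ} (P : Fin n → Fin n → Option (Fin k)) : ℕ :=
  (Finset.univ.filter (fun p : Fin n × Fin n => P p.1 p.2 ≠ none)).card

/-- The defining number `d(L(n,k))`. -/
noncomputable def definingNumber (n k : ℕ) : ℕ :=
  sInf {m | ∃ P : Fin n → Fin n → Option (Fin k),
    UniquelyExtends n k P ∧ numColored P = m}

/-- The set of available colors for entry `(i,j)`: colors not appearing among
the colored entries of row `i` or column `j`. -/
def availColors {n k : ℕ} (P : Fin n → Fin n → Option (Fin k)) (i j : Fin n) :
    Finset (Fin k) :=
  Finset.univ.filter (fun c => (∀ w, P i w ≠ some c) ∧ (∀ h, P h j ≠ some c))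

namespace DNaux


/-- Edge coloring of `K_n` (for even `n`) with `n-1` colors: round-robin. -/
def cc (n i j : ℕ) : ℕ :=
  if i = n - 1 then (2*j) % (n-1)
  else if j = n - 1 then (2*i) % (n-1)
  else (i + j) % (n-1)

lemma cc_lt {n : ℕ} (hn : 2 ≤ n) (i j : ℕ) : cc n i j < n - 1 := by
  unfold cc; split_ifs <;> exact Nat.mod_lt _ (by omega)

lemma cc_symm {n : ℕ} (i j : ℕ) : cc n i j = cc n j i := by
  unfold cc; split_ifs <;> first | rfl | omega | (subst_vars; rfl) | (rw [Nat.add_comm])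

lemma cc_inj {n i j j' : ℕ} (hn : 2 ≤ n) (hodd : ¬ 2 ∣ (n-1))
    (hi : i < n) (hj : j < n) (hj' : j' < n) (hji : j ≠ i) (hj'i : j' ≠ i)
    (h : cc n i j = cc n i j') : j = j' := by
  have hm1 : 1 ≤ n - 1 := by omega
  have hcop : Nat.Coprime (n-1) 2 := Nat.coprime_two_right.mpr (Nat.odd_iff.mpr (by omega))
  unfold cc at h
  by_cases hi' : i = n - 1
  · rw [if_pos hi', if_pos hi'] at h
    have h2 : j ≡ j' [MOD (n-1)] := Nat.ModEq.cancel_left_of_coprime hcop h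
    unfold Nat.ModEq at h2
    rwa [Nat.mod_eq_of_lt (by omega), Nat.mod_eq_of_lt (by omega)] at h2
  · rw [if_neg hi'] at h
    rw [if_neg hi'] at h
    have him : i < n - 1 := by omega
    by_cases hjn : j = n - 1 <;> by_cases hj'n : j' = n - 1
    · omega
    · rw [if_pos hjn, if_neg hj'n] at h
      rw [two_mul] at h
      have h3 : i ≡ j' [MOD (n-1)] := Nat.ModEq.add_left_cancel' i h
      unfold Nat.ModEq at h3
      rw [Nat.mod_eq_of_lt him, Nat.mod_eq_of_lt (by omega : j' < n - 1)] at h3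
      omega
    · rw [if_neg hjn, if_pos hj'n] at h
      rw [two_mul] at h
      have h3 : j ≡ i [MOD (n-1)] := Nat.ModEq.add_left_cancel' i h
      unfold Nat.ModEq at h3
      rw [Nat.mod_eq_of_lt him, Nat.mod_eq_of_lt (by omega : j < n - 1)] at h3
      omega
    · rw [if_neg hjn, if_neg hj'n] at h
      have h3 : j ≡ j' [MOD (n-1)] := Nat.ModEq.add_left_cancel' i h
      unfold Nat.ModEq at h3
      rw [Nat.mod_eq_of_lt (by omega : j < n-1), Nat.mod_eq_of_lt (by omega : j' < n-1)] at h3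
      exact h3

lemma cc_surj {n : ℕ} (hn : 2 ≤ n) (hodd : ¬ 2 ∣ (n-1)) {i t : ℕ}
    (hi : i < n) (ht : t < n - 1) : ∃ w, w < n ∧ w ≠ i ∧ cc n i w = t := by
  set m := n - 1 with hm
  have hm0 : 0 < m := by omega
  by_cases hi' : i = n - 1
  · have hw : (t * ((m+1)/2)) % m < m := Nat.mod_lt _ hm0
    refine ⟨(t * ((m+1)/2)) % m, by omega, by omega, ?_⟩
    unfold cc
    rw [if_pos hi', ← hm, Nat.mul_mod_mod]
    have h2 : 2 * (t * ((m+1)/2)) = m * t + t := by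
      have h3 : 2 * ((m+1)/2) = m + 1 := by omega
      calc 2 * (t * ((m+1)/2)) = t * (2 * ((m+1)/2)) := by ring
        _ = t * (m+1) := by rw [h3]
        _ = m * t + t := by ring
    rw [h2, Nat.mul_add_mod, Nat.mod_eq_of_lt (by omega)]
  · by_cases h2i : t = (2*i) % m
    · refine ⟨n - 1, by omega, by omega, ?_⟩
      unfold cc
      rw [if_neg hi', if_pos rfl, ← hm, h2i]
    · have him : i < m := by omega
      have hkey : (i + ((t + m - i) % m)) % m = t := by
        rw [Nat.add_mod_mod]
        have h4 : i + (t + m - i) = t + m := by omega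
        rw [h4, Nat.add_mod_right, Nat.mod_eq_of_lt (by omega)]
      have hwm : (t + m - i) % m < m := Nat.mod_lt _ hm0
      refine ⟨(t + m - i) % m, by omega, ?_, ?_⟩
      · intro hwi
        apply h2i
        rw [hwi] at hkey
        rw [← hkey, two_mul]
      · unfold cc
        rw [if_neg hi', if_neg (by omega), ← hm]
        exact hkey



/-- value of the Latin array -/
def lcv (n i j : ℕ) : ℕ :=
  if i = j then 0 else if i < j then cc n i j + 1 else cc n i j + n

lemma lcv_lt {n : ℕ} (hn : 2 ≤ n) (i j : ℕ) : lcv n i j < 2*n - 1 := by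
  have h1 := cc_lt hn i j
  unfold lcv; split_ifs <;> omega

/-- The Latin array. -/
def LC (n : ℕ) (hn : 2 ≤ n) (i j : Fin n) : Fin (2*n-1) :=
  ⟨lcv n i j, lcv_lt hn i j⟩

lemma LC_row_inj {n : ℕ} (hn : 2 ≤ n) (hodd : ¬ 2 ∣ (n-1)) (i : Fin n) :
    Function.Injective (LC n hn i) := by
  intro j j' h
  have hv : lcv n i j = lcv n i j' := congrArg Fin.val h
  have c1 := cc_lt hn (i : ℕ) (j : ℕ)
  have c2 := cc_lt hn (i : ℕ) (j' : ℕ)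
  unfold lcv at hv
  split_ifs at hv with h1 h2 h3 h4 h5 h6 h7 <;>
    first
      | omega
      | exact Fin.ext (by omega)
      | (exact Fin.ext (cc_inj hn hodd i.isLt j.isLt j'.isLt (by omega) (by omega) (by omega)))

lemma LC_col_inj {n : ℕ} (hn : 2 ≤ n) (hodd : ¬ 2 ∣ (n-1)) (j : Fin n) :
    Function.Injective (fun i => LC n hn i j) := by
  intro i i' h
  simp only at h
  have hv : lcv n i j = lcv n i' j := congrArg Fin.val h
  have c1 := cc_lt hn (i : ℕ) (j : ℕ)
  have c2 := cc_lt hn (i' : ℕ) (j : ℕ)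
  unfold lcv at hv
  split_ifs at hv with h1 h2 h3 h4 h5 h6 h7 <;>
    first
      | omega
      | exact Fin.ext (by omega)
      | (exact Fin.ext (cc_inj hn hodd j.isLt i.isLt i'.isLt (by omega) (by omega)
          ((cc_symm (j:ℕ) i).trans (((by omega : cc n (i:ℕ) j = cc n (i':ℕ) j)).trans (cc_symm (i':ℕ) j)))))

lemma LC_diag {n : ℕ} (hn : 2 ≤ n) (i : Fin n) : (LC n hn i i : ℕ) = 0 := by
  simp [LC, lcv]

/-- coverage: every nonzero color appears in row i or column i off the diagonal -/
lemma LC_cover {n : ℕ} (hn : 2 ≤ n) (hodd : ¬ 2 ∣ (n-1)) (i : Fin n)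
    (v : Fin (2*n-1)) (hv : v ≠ LC n hn i i) :
    ∃ w : Fin n, w ≠ i ∧ (LC n hn i w = v ∨ LC n hn w i = v) := by
  have hv0 : 0 < (v : ℕ) := by
    rcases Nat.eq_zero_or_pos (v : ℕ) with h | h
    · exact absurd (Fin.ext (by rw [h, LC_diag hn i])) hv
    · exact h
  by_cases hsmall : (v : ℕ) ≤ n - 1
  · obtain ⟨w, hwn, hwi, hcw⟩ := cc_surj hn hodd i.isLt (show (v:ℕ) - 1 < n - 1 by omega)
    refine ⟨⟨w, hwn⟩, by simpa [Fin.ext_iff] using hwi, ?_⟩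
    rcases Nat.lt_or_ge (i : ℕ) w with hlt | hge
    · left
      apply Fin.ext
      show lcv n i w = (v : ℕ)
      unfold lcv
      rw [if_neg (by omega), if_pos hlt, hcw]
      omega
    · right
      apply Fin.ext
      show lcv n w i = (v : ℕ)
      unfold lcv
      rw [if_neg (by omega), if_pos (by omega), cc_symm, hcw]
      omega
  · obtain ⟨w, hwn, hwi, hcw⟩ := cc_surj hn hodd i.isLt (show (v:ℕ) - n < n - 1 from by have := v.isLt; omega)
    refine ⟨⟨w, hwn⟩, by simpa [Fin.ext_iff] using hwi, ?_⟩
    rcases Nat.lt_or_ge (w : ℕ) (i : ℕ) with hlt | hge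
    · left
      apply Fin.ext
      show lcv n i w = (v : ℕ)
      unfold lcv
      rw [if_neg (by omega), if_neg (by omega), hcw]
      omega
    · right
      apply Fin.ext
      show lcv n w i = (v : ℕ)
      unfold lcv
      rw [if_neg (by omega), if_neg (by omega), cc_symm, hcw]
      omega


/-- The partial coloring: `LC` minus the diagonal. -/
def Pc (n : ℕ) (hn : 2 ≤ n) : Fin n → Fin n → Option (Fin (2*n-1)) :=
  fun i j => if i = j then none else some (LC n hn i j)

lemma Pc_unique {n : ℕ} (hn : 2 ≤ n) (hodd : ¬ 2 ∣ (n-1)) :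
    UniquelyExtends n (2*n-1) (Pc n hn) := by
  refine ⟨LC n hn, ⟨⟨LC_row_inj hn hodd, LC_col_inj hn hodd⟩, ?_⟩, ?_⟩
  · intro i j c h
    unfold Pc at h
    by_cases hij : i = j
    · rw [if_pos hij] at h
      exact absurd h (by simp)
    · rw [if_neg hij] at h
      exact Option.some_injective _ h
  · rintro L' ⟨⟨hr, hc⟩, hext⟩
    have hoff : ∀ a b : Fin n, a ≠ b → L' a b = LC n hn a b := by
      intro a b hab
      exact hext a b _ (by unfold Pc; rw [if_neg hab])
    funext i j
    by_cases hij : i = j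
    · subst hij
      by_contra hne
      obtain ⟨w, hwi, hcase⟩ := LC_cover hn hodd i (L' i i) (fun hh => hne hh)
      rcases hcase with h | h
      · have : L' i w = L' i i := (hoff i w (Ne.symm hwi)).trans h
        exact hwi (hr i this)
      · have : L' w i = L' i i := (hoff w i hwi).trans h
        exact hwi (hc i this)
    · exact hoff i j hij

lemma Pc_none_iff {n : ℕ} (hn : 2 ≤ n) (i j : Fin n) :
    Pc n hn i j = none ↔ i = j := by
  unfold Pc
  split_ifs with h <;> simp [h]

lemma Pc_uncolored {n : ℕ} (hn : 2 ≤ n) : numUncolored (Pc n hn) = n := by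
  unfold numUncolored
  have h1 : (Finset.univ.filter (fun p : Fin n × Fin n => Pc n hn p.1 p.2 = none))
      = Finset.univ.image (fun i : Fin n => (i, i)) := by
    ext p
    simp only [Finset.mem_filter, Finset.mem_univ, true_and, Finset.mem_image,
      Pc_none_iff hn]
    constructor
    · intro h
      exact ⟨p.1, Prod.ext_iff.mpr ⟨rfl, h⟩⟩
    · rintro ⟨a, rfl⟩
      rfl
  rw [h1, Finset.card_image_of_injective _ (fun a b h => (Prod.ext_iff.mp h).1),
    Finset.card_univ, Fintype.card_fin]


open Finset

/-- If `(a,b)` is uncolored and `L` is the unique extension, then the off entries of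
row `a` and column `b` have pairwise different colors. -/
lemma freedom {n : ℕ} (L : Fin n → Fin n → Fin (2*n-1))
    (hLat : IsLatin n (2*n-1) L) (P : Fin n → Fin n → Option (Fin (2*n-1)))
    (hExt : ExtendsPC P L)
    (huniq : ∀ L', (IsLatin n (2*n-1) L' ∧ ExtendsPC P L') → L' = L)
    (a b : Fin n) (hab : P a b = none) :
    ∀ w x, w ≠ b → x ≠ a → L a w ≠ L x b := by
  classical
  have hn : 0 < n := a.pos
  set A := (Finset.univ.erase b).image (fun w => L a w) with hA
  set B := (Finset.univ.erase a).image (fun x => L x b) with hB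
  have step1 : ∀ v, v ∉ A → v ∉ B → v = L a b := by
    intro v hvA hvB
    by_contra hv
    set L' := fun (p q : Fin n) => if p = a ∧ q = b then v else L p q with hL'
    have hrow : ∀ p, Function.Injective (L' p) := by
      intro p q q' h
      simp only [hL'] at h
      by_cases hp : p = a
      · subst hp
        by_cases hq : q = b <;> by_cases hq' : q' = b
      -- four cases
        · rw [hq, hq']
        · rw [if_pos ⟨rfl, hq⟩, if_neg (by tauto)] at h
          exact absurd (mem_image.mpr ⟨q', mem_erase.mpr ⟨hq', mem_univ _⟩, h.symm⟩) hvA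
        · rw [if_neg (by tauto), if_pos ⟨rfl, hq'⟩] at h
          exact absurd (mem_image.mpr ⟨q, mem_erase.mpr ⟨hq, mem_univ _⟩, h⟩) hvA
        · rw [if_neg (by tauto), if_neg (by tauto)] at h
          exact hLat.1 p h
      · rw [if_neg (by tauto), if_neg (by tauto)] at h
        exact hLat.1 p h
    have hcol : ∀ q, Function.Injective (fun p => L' p q) := by
      intro q p p' h
      simp only [hL'] at h
      by_cases hq : q = b
      · subst hq
        by_cases hp : p = a <;> by_cases hp' : p' = a
        · rw [hp, hp']
        · rw [if_pos ⟨hp, rfl⟩, if_neg (by tauto)] at h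
          exact absurd (mem_image.mpr ⟨p', mem_erase.mpr ⟨hp', mem_univ _⟩, h.symm⟩) hvB
        · rw [if_neg (by tauto), if_pos ⟨hp', rfl⟩] at h
          exact absurd (mem_image.mpr ⟨p, mem_erase.mpr ⟨hp, mem_univ _⟩, h⟩) hvB
        · rw [if_neg (by tauto), if_neg (by tauto)] at h
          exact hLat.2 q h
      · rw [if_neg (by tauto), if_neg (by tauto)] at h
        exact hLat.2 q h
    have hext' : ExtendsPC P L' := by
      intro p q c hpq
      simp only [hL']
      rcases Decidable.em (p = a ∧ q = b) with h | h
      · rw [h.1, h.2, hab] at hpq; exact absurd hpq (by simp)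
      · rw [if_neg h]; exact hExt p q c hpq
    have hlt' : IsLatin n (2*n-1) L' := ⟨hrow, hcol⟩
    have := huniq L' ⟨hlt', hext'⟩
    have h2 : L' a b = L a b := by rw [this]
    simp [hL'] at h2
    exact hv h2
  have hLaA : L a b ∉ A := by
    intro h
    obtain ⟨w, hw, he⟩ := mem_image.mp h
    exact (mem_erase.mp hw).1 (hLat.1 a he)
  have hLaB : L a b ∉ B := by
    intro h
    obtain ⟨x, hx, he⟩ := mem_image.mp h
    exact (mem_erase.mp hx).1 (hLat.2 b he)
  have hcover : Finset.univ.erase (L a b) ⊆ A ∪ B := by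
    intro v hv
    by_contra hcon
    rw [mem_union] at hcon
    push_neg at hcon
    exact (mem_erase.mp hv).1 (step1 v hcon.1 hcon.2)
  have hcardU : (Finset.univ.erase (L a b)).card = 2*n - 2 := by
    rw [card_erase_of_mem (mem_univ _), card_univ, Fintype.card_fin]; omega
  have hcardA : A.card ≤ n - 1 := by
    calc A.card ≤ (Finset.univ.erase b).card := card_image_le
      _ = n - 1 := by rw [card_erase_of_mem (mem_univ _), card_univ, Fintype.card_fin]
  have hcardB : B.card ≤ n - 1 := by
    calc B.card ≤ (Finset.univ.erase a).card := card_image_le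
      _ = n - 1 := by rw [card_erase_of_mem (mem_univ _), card_univ, Fintype.card_fin]
  have hunion : 2*n - 2 ≤ (A ∪ B).card := hcardU ▸ card_le_card hcover
  have hinter : (A ∩ B).card = 0 := by
    have := card_union_add_card_inter A B
    omega
  have hABempty : A ∩ B = ∅ := card_eq_zero.mp hinter
  intro w x hw hx heq
  have h1 : L a w ∈ A := mem_image.mpr ⟨w, mem_erase.mpr ⟨hw, mem_univ _⟩, rfl⟩
  have h2 : L a w ∈ B := mem_image.mpr ⟨x, mem_erase.mpr ⟨hx, mem_univ _⟩, heq.symm⟩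
  have : L a w ∈ A ∩ B := mem_inter.mpr ⟨h1, h2⟩
  rw [hABempty] at this
  exact absurd this (notMem_empty _)

/-- Two uncolored cells in one row kill uniqueness. -/
lemma no_unique_two_row {n : ℕ} (P : Fin n → Fin n → Option (Fin (2*n-1)))
    (i j j' : Fin n) (hjj : j ≠ j') (h1 : P i j = none) (h2 : P i j' = none) :
    ¬ UniquelyExtends n (2*n-1) P := by
  classical
  rintro ⟨L, ⟨hLat, hExt⟩, huniq⟩
  have huniq' : ∀ L', (IsLatin n (2*n-1) L' ∧ ExtendsPC P L') → L' = L := huniq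
  have key1 : ∀ w x, w ≠ j → x ≠ i → L i w ≠ L x j := freedom L hLat P hExt huniq' i j h1
  have key2 : ∀ w x, w ≠ j' → x ≠ i → L i w ≠ L x j' := freedom L hLat P hExt huniq' i j' h2
  set L'' := fun (p q : Fin n) => if p = i then L i (Equiv.swap j j' q) else L p q with hL''
  have hrow : ∀ p, Function.Injective (L'' p) := by
    intro p q q' h
    simp only [hL''] at h
    by_cases hp : p = i
    · rw [if_pos hp, if_pos hp] at h
      exact (Equiv.swap j j').injective (hLat.1 i h)
    · rw [if_neg hp, if_neg hp] at h
      exact hLat.1 p h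
  have hcol : ∀ q, Function.Injective (fun p => L'' p q) := by
    intro q p p' h
    simp only [hL''] at h
    by_cases hp : p = i <;> by_cases hp' : p' = i
    · rw [hp, hp']
    · exfalso
      rw [if_pos hp, if_neg hp'] at h
      subst hp
      by_cases hq : q = j
      · subst hq
        rw [Equiv.swap_apply_left] at h
        exact key1 j' p' (Ne.symm hjj) hp' h
      · by_cases hq' : q = j'
        · subst hq'
          rw [Equiv.swap_apply_right] at h
          exact key2 j p' hjj hp' h
        · rw [Equiv.swap_apply_of_ne_of_ne hq hq'] at h
          exact hp' (hLat.2 q h).symm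
    · exfalso
      rw [if_neg hp, if_pos hp'] at h
      subst hp'
      by_cases hq : q = j
      · subst hq
        rw [Equiv.swap_apply_left] at h
        exact key1 j' p (Ne.symm hjj) hp h.symm
      · by_cases hq' : q = j'
        · subst hq'
          rw [Equiv.swap_apply_right] at h
          exact key2 j p hjj hp h.symm
        · rw [Equiv.swap_apply_of_ne_of_ne hq hq'] at h
          exact hp (hLat.2 q h)
    · rw [if_neg hp, if_neg hp'] at h
      exact hLat.2 q h
  have hext'' : ExtendsPC P L'' := by
    intro p q c hpq
    simp only [hL'']
    by_cases hp : p = i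
    · subst hp
      have hq : q ≠ j := by rintro rfl; rw [h1] at hpq; exact absurd hpq (by simp)
      have hq' : q ≠ j' := by rintro rfl; rw [h2] at hpq; exact absurd hpq (by simp)
      rw [if_pos rfl, Equiv.swap_apply_of_ne_of_ne hq hq']
      exact hExt p q c hpq
    · rw [if_neg hp]
      exact hExt p q c hpq
  have hlt'' : IsLatin n (2*n-1) L'' := ⟨hrow, hcol⟩
  have heqL : L'' = L := huniq L'' ⟨hlt'', hext''⟩
  have : L'' i j = L i j := by rw [heqL]
  simp only [hL'', if_pos rfl, Equiv.swap_apply_left] at this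
  exact hjj ((hLat.1 i this).symm)

lemma exists_two_in_row {n k : ℕ} (P : Fin n → Fin n → Option (Fin k))
    (h : n < numUncolored P) :
    ∃ (i j j' : Fin n), j ≠ j' ∧ P i j = none ∧ P i j' = none := by
  classical
  by_contra hc
  push_neg at hc
  have hle : numUncolored P ≤ n := by
    unfold numUncolored
    rw [Finset.card_eq_sum_card_fiberwise
      (f := Prod.fst) (t := Finset.univ) (fun x _ => Finset.mem_univ _)]
    calc ∑ i : Fin n, ((Finset.univ.filter (fun p : Fin n × Fin n => P p.1 p.2 = none)).filter
          (fun p => p.1 = i)).card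
        ≤ ∑ _i : Fin n, 1 := by
          apply Finset.sum_le_sum
          intro i _
          apply Finset.card_le_one.mpr
          intro p hp q hq
          simp only [Finset.mem_filter, Finset.mem_univ, true_and] at hp hq
          have hp1 : p.1 = i := hp.2
          have hq1 : q.1 = i := hq.2
          have : p.2 = q.2 := by
            by_contra hne
            exact (hc i p.2 q.2 hne (hp1 ▸ hp.1)) (hq1 ▸ hq.1)
          exact Prod.ext (hp1.trans hq1.symm) this
      _ = n := by simp
  omega


lemma colored_add_uncolored {n k : ℕ} (P : Fin n → Fin n → Option (Fin k)) :
    numColored P + numUncolored P = n * n := by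
  classical
  unfold numColored numUncolored
  have h1 : (Finset.univ.filter (fun p : Fin n × Fin n => P p.1 p.2 = none))
      = Finset.univ.filter (fun p : Fin n × Fin n => ¬ P p.1 p.2 ≠ none) := by
    apply Finset.filter_congr
    intro p _
    simp
  rw [h1, Finset.card_filter_add_card_filter_not, Finset.card_univ]
  simp

end DNaux

theorem defining_number_2n_minus_1_even (n : ℕ) (hn : Even n) :
    definingNumber n (2*n-1) = n^2 - n ∧
    (∃ P : Fin n → Fin n → Option (Fin (2*n-1)),
      UniquelyExtends n (2*n-1) P ∧ numUncolored P = n ∧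
      (∀ i : Fin n, ∃! j : Fin n, P i j = none) ∧
      (∀ j : Fin n, ∃! i : Fin n, P i j = none)) ∧
    (∀ P : Fin n → Fin n → Option (Fin (2*n-1)),
      n < numUncolored P → ¬ UniquelyExtends n (2*n-1) P) := by
  classical
  have hsq : n ^ 2 = n * n := sq n
  -- Part 3 holds for all n
  have part3 : ∀ P : Fin n → Fin n → Option (Fin (2*n-1)),
      n < numUncolored P → ¬ UniquelyExtends n (2*n-1) P := by
    intro P hP
    obtain ⟨i, j, j', hjj, hij, hij'⟩ := DNaux.exists_two_in_row P hP
    exact DNaux.no_unique_two_row P i j j' hjj hij hij'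
  rcases Nat.eq_zero_or_pos n with rfl | hpos
  · -- n = 0
    have hU0 : UniquelyExtends 0 (2*0-1) (fun i _ => i.elim0) := by
      refine ⟨fun i => i.elim0, ⟨⟨fun i => i.elim0, fun j => j.elim0⟩, fun i => i.elim0⟩,
        fun L' _ => funext fun i => i.elim0⟩
    refine ⟨?_, ⟨fun i _ => i.elim0, hU0, by simp [numUncolored],
      fun i => i.elim0, fun j => j.elim0⟩, part3⟩
    have h0 : (0:ℕ)^2 - 0 = 0 := by norm_num
    rw [h0]
    apply Nat.sInf_eq_zero.mpr
    left
    exact ⟨fun i _ => i.elim0, hU0, by simp [numColored]⟩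
  · -- n ≥ 2 even
    have hn2 : 2 ≤ n := by
      obtain ⟨r, hr⟩ := hn; omega
    have hodd : ¬ 2 ∣ (n-1) := by
      obtain ⟨r, hr⟩ := hn; omega
    have hUc : UniquelyExtends n (2*n-1) (DNaux.Pc n hn2) := DNaux.Pc_unique hn2 hodd
    have hNc : numColored (DNaux.Pc n hn2) = n^2 - n := by
      have h1 := DNaux.colored_add_uncolored (DNaux.Pc n hn2)
      rw [DNaux.Pc_uncolored hn2] at h1
      omega
    have hmem : n^2 - n ∈ {m | ∃ P : Fin n → Fin n → Option (Fin (2*n-1)),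
        UniquelyExtends n (2*n-1) P ∧ numColored P = m} := ⟨DNaux.Pc n hn2, hUc, hNc⟩
    refine ⟨?_, ?_, part3⟩
    · apply le_antisymm (Nat.sInf_le hmem)
      apply le_csInf ⟨_, hmem⟩
      rintro m ⟨P, hU, rfl⟩
      have h1 : numUncolored P ≤ n := by
        by_contra hcon
        exact part3 P (by omega) hU
      have h2 := DNaux.colored_add_uncolored P
      omega
    · refine ⟨DNaux.Pc n hn2, hUc, DNaux.Pc_uncolored hn2, ?_, ?_⟩
      · intro i
        refine ⟨i, (DNaux.Pc_none_iff hn2 i i).mpr rfl, ?_⟩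
        intro y hy
        exact ((DNaux.Pc_none_iff hn2 i y).mp hy).symm
      · intro j
        refine ⟨j, (DNaux.Pc_none_iff hn2 j j).mpr rfl, ?_⟩
        intro y hy
        exact (DNaux.Pc_none_iff hn2 y j).mp hy
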